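/- The random Fibonacci substitution subshift contains no periodic points. -/

import Mathlib

open List

variable {A : Type*}

/-- Extension of a random substitution to words, by concatenation. -/
def substWord (θ : A → Set (List A)) : List A → Set (List A)
  | [] => {[]}
  | a :: u => {w | ∃ x ∈ θ a, ∃ y ∈ substWord θ u, w = x ++ y}

/-- The set of realisations of `θ^k` on a word. -/
def substPowWord (θ : A → Set (List A)) : ℕ → List A → Set (List A)
  | 0, u => {u}
  | (k+1), u => ⋃ v ∈ substPowWord θ k u, substWord θ v

/-- The power `θ^k` as a random substitution. -/
def powSub (θ : A → Set (List A)) (k : ℕ) : A → Set (List A) :=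
  fun a => substPowWord θ k [a]

/-- `θ` is a (finite range) random substitution: every letter has a nonempty
finite set of realisations, all of which are nonempty words. -/
def RandomSubstitution (θ : A → Set (List A)) : Prop :=
  ∀ a : A, (θ a).Nonempty ∧ (θ a).Finite ∧ ∀ w ∈ θ a, w ≠ []

/-- A word is `θ`-legal if it is a subword of a realisation of some power of
`θ` on some letter. -/
def IsLegal (θ : A → Set (List A)) (u : List A) : Prop :=
  ∃ k : ℕ, ∃ a : A, ∃ w ∈ substPowWord θ k [a], u <:+: w

/-- `θ` has disjoint images. -/
def HasDisjointImages (θ : A → Set (List A)) : Prop :=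
  ∀ u v : List A, IsLegal θ u → IsLegal θ v →
    (substWord θ u ∩ substWord θ v).Nonempty → u = v

/-- `θ` has constant length `ℓ`. -/
def ConstantLength (θ : A → Set (List A)) (ℓ : ℕ) : Prop :=
  ∀ a : A, ∀ w ∈ θ a, w.length = ℓ

/-- `θ` is compatible: abelianisations of realisations are well defined. -/
def Compatible [DecidableEq A] (θ : A → Set (List A)) : Prop :=
  ∀ a : A, ∀ u ∈ θ a, ∀ v ∈ θ a, ∀ b : A, u.count b = v.count b

/-- `θ` is primitive. -/
def Primitive (θ : A → Set (List A)) : Prop :=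
  ∃ k : ℕ, ∀ a b : A, ∃ w ∈ substPowWord θ k [a], b ∈ w

/-- The finite subword of a bi-infinite sequence starting at `i`, of length `n`. -/
def extract (x : ℤ → A) (i : ℤ) (n : ℕ) : List A :=
  (List.range n).map fun j => x (i + j)

/-- The RS-subshift of `θ`: bi-infinite sequences all of whose subwords are legal. -/
def Subshift (θ : A → Set (List A)) : Set (ℤ → A) :=
  {x | ∀ i : ℤ, ∀ n : ℕ, IsLegal θ (extract x i n)}

/-- `x` is a realisation-wise image of `y` under `θ`: there is a decomposition
of `x` into consecutive inflation words, with a cut at the origin, the `n`-th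
of which is a realisation of `θ` on `y n`. -/
def SeqImage (θ : A → Set (List A)) (y x : ℤ → A) : Prop :=
  ∃ c : ℤ → ℤ, c 0 = 0 ∧ (∀ n : ℤ, c n < c (n + 1)) ∧
    ∀ n : ℤ, extract x (c n) (c (n + 1) - c n).toNat ∈ θ (y n)

/-- `θ` is globally uniquely recognisable. -/
def GloballyUniquelyRecognisable (θ : A → Set (List A)) : Prop :=
  ∀ x ∈ Subshift θ, ∃! y : ℤ → A, y ∈ Subshift θ ∧
    ∃ k : ℕ, (∃ w ∈ θ (y 0), k < w.length) ∧ SeqImage θ y (fun n => x (n - k))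

/-- `x` has period `p` (as a natural number, acting on indices in `ℤ`). -/
def HasPeriod (x : ℤ → A) (p : ℕ) : Prop :=
  ∀ n : ℤ, x (n + p) = x n

/-- `x` is shift-periodic. -/
def IsPeriodic (x : ℤ → A) : Prop :=
  ∃ p : ℕ, 0 < p ∧ HasPeriod x p

/-- `p` is the prime (least) period of `x`. -/
def PrimePeriod (x : ℤ → A) (p : ℕ) : Prop :=
  0 < p ∧ HasPeriod x p ∧ ∀ q : ℕ, 0 < q → HasPeriod x q → p ≤ q

/-- `u` is a periodic block for `x`: up to shift, `x` is the bi-infinite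
repetition of `u`. -/
def PeriodicBlock (u : List A) (x : ℤ → A) : Prop :=
  u ≠ [] ∧ ∃ i : ℤ, ∀ n : ℤ, extract x (i + n * u.length) u.length = u

inductive Letter : Type
  | a : Letter
  | b : Letter
  deriving DecidableEq

/-- The random Fibonacci substitution `a ↦ {ab, ba}, b ↦ {a}`. -/
def randFib : Letter → Set (List Letter) :=
  fun x => match x with
  | .a => {[Letter.a, Letter.b], [Letter.b, Letter.a]}
  | .b => {[Letter.a]}


namespace RandFibAux

lemma mem_substWord_nil {θ : A → Set (List A)} {z : List A} :
    z ∈ substWord θ ([] : List A) ↔ z = [] := Iff.rfl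

lemma mem_substWord_cons {θ : A → Set (List A)} {c : A} {z u : List A} :
    z ∈ substWord θ (c :: u) ↔ ∃ x ∈ θ c, ∃ y ∈ substWord θ u, z = x ++ y := Iff.rfl

lemma count_a_add_count_b (l : List Letter) :
    l.count Letter.a + l.count Letter.b = l.length := by
  induction l with
  | nil => simp
  | cons c t ih => cases c <;> simp [List.count_cons] <;> omega

lemma randFib_mem_a {x : List Letter} (h : x ∈ randFib Letter.a) :
    x = [Letter.a, Letter.b] ∨ x = [Letter.b, Letter.a] := h

lemma randFib_mem_b {x : List Letter} (h : x ∈ randFib Letter.b) :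
    x = [Letter.a] := h

lemma randFib_len {c : Letter} {x : List Letter} (h : x ∈ randFib c) : x.length ≤ 2 := by
  cases c
  · rcases randFib_mem_a h with rfl | rfl <;> simp
  · rcases randFib_mem_b h with rfl; simp

lemma substWord_count : ∀ {w z : List Letter}, z ∈ substWord randFib w →
    z.count Letter.a = w.length ∧ z.count Letter.b = w.count Letter.a := by
  intro w
  induction w with
  | nil =>
    intro z hz; rw [mem_substWord_nil] at hz; subst hz; simp
  | cons c u ih =>
    rintro z ⟨x, hx, y, hy, rfl⟩
    obtain ⟨ha, hb⟩ := ih hy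
    cases c
    · rcases randFib_mem_a hx with rfl | rfl <;>
        simp [List.count_append, List.count_cons, ha, hb] <;> omega
    · rcases randFib_mem_b hx with rfl
      simp [List.count_append, List.count_cons, ha, hb] <;> omega

lemma substWord_length {w z : List Letter} (h : z ∈ substWord randFib w) :
    z.length = w.length + w.count Letter.a := by
  obtain ⟨ha, hb⟩ := substWord_count h
  have h1 := count_a_add_count_b z
  have h2 := count_a_add_count_b w
  omega

lemma desub_prefix : ∀ {w z v : List Letter}, z ∈ substWord randFib w → v <+: z →
    ∃ w' z' p, w' <+: w ∧ z' ∈ substWord randFib w' ∧ p.length ≤ 2 ∧ v = z' ++ p := by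
  intro w
  induction w with
  | nil =>
    intro z v hz hv
    rw [mem_substWord_nil] at hz; subst hz
    have hv' : v = [] := List.prefix_nil.mp hv
    exact ⟨[], [], [], List.prefix_rfl, rfl, by simp, by simp [hv']⟩
  | cons c u ih =>
    rintro z v ⟨x, hx, y, hy, rfl⟩ hv
    by_cases hlen : v.length ≤ x.length
    · exact ⟨[], [], v, List.nil_prefix, rfl, hlen.trans (randFib_len hx), by simp⟩
    · have hxv : x <+: v :=
        List.prefix_of_prefix_length_le (List.prefix_append x y) hv (by omega)
      obtain ⟨v₂, rfl⟩ := hxv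
      have hv₂ : v₂ <+: y := by
        obtain ⟨t, ht⟩ := hv
        rw [List.append_assoc] at ht
        exact ⟨t, List.append_cancel_left ht⟩
      obtain ⟨w', z', p, hw', hz', hp, rfl⟩ := ih hy hv₂
      exact ⟨c :: w', x ++ z', p, List.cons_prefix_cons.mpr ⟨rfl, hw'⟩,
        ⟨x, hx, z', hz', rfl⟩, hp, by simp [List.append_assoc]⟩

lemma desub_suffix : ∀ {w z v : List Letter}, z ∈ substWord randFib w → v <:+ z →
    ∃ w' z' s, w' <:+ w ∧ z' ∈ substWord randFib w' ∧ s.length ≤ 2 ∧ v = s ++ z' := by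
  intro w
  induction w with
  | nil =>
    intro z v hz hv
    rw [mem_substWord_nil] at hz; subst hz
    have hv' : v = [] := List.suffix_nil.mp hv
    exact ⟨[], [], [], List.suffix_rfl, rfl, by simp, by simp [hv']⟩
  | cons c u ih =>
    rintro z v ⟨x, hx, y, hy, rfl⟩ hv
    by_cases hlen : v.length ≤ y.length
    · have hvy : v <:+ y :=
        List.suffix_of_suffix_length_le hv (List.suffix_append x y) hlen
      obtain ⟨w', z', s, hw', hz', hs, rfl⟩ := ih hy hvy
      exact ⟨w', z', s, hw'.trans (List.suffix_cons c u), hz', hs, rfl⟩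
    · have hyv : y <:+ v :=
        List.suffix_of_suffix_length_le (List.suffix_append x y) hv (by omega)
      obtain ⟨s, rfl⟩ := hyv
      have hsx : s <:+ x := by
        obtain ⟨t, ht⟩ := hv
        rw [← List.append_assoc] at ht
        exact ⟨t, (List.append_cancel_right ht)⟩
      refine ⟨u, y, s, List.suffix_cons c u, hy, ?_, rfl⟩
      exact hsx.length_le.trans (randFib_len hx)

lemma desub_infix {w z v : List Letter} (hz : z ∈ substWord randFib w) (hv : v <:+: z) :
    ∃ w' z' s p, w' <:+: w ∧ z' ∈ substWord randFib w' ∧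
      s.length ≤ 2 ∧ p.length ≤ 2 ∧ v = s ++ z' ++ p := by
  obtain ⟨t, hvt, htz⟩ := List.infix_iff_prefix_suffix.mp hv
  obtain ⟨w₁, z₁, s₁, hw₁, hz₁, hs₁, rfl⟩ := desub_suffix hz htz
  by_cases hlen : v.length ≤ s₁.length
  · refine ⟨[], [], v, [], ?_, rfl, by omega, by simp, by simp⟩
    exact List.nil_infix
  · have hsv : s₁ <+: v :=
      List.prefix_of_prefix_length_le (List.prefix_append s₁ z₁) hvt (by omega)
    obtain ⟨v₂, rfl⟩ := hsv
    have hv₂ : v₂ <+: z₁ := by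
      obtain ⟨t', ht'⟩ := hvt
      rw [List.append_assoc] at ht'
      exact ⟨t', List.append_cancel_left ht'⟩
    obtain ⟨w', z', p, hw', hz', hp, rfl⟩ := desub_prefix hz₁ hv₂
    exact ⟨w', z', s₁, p, (hw'.isInfix.trans hw₁.isInfix), hz', hs₁, hp,
      by simp [List.append_assoc]⟩

lemma isLegal_infix {θ : A → Set (List A)} {u v : List A} (h : u <:+: v)
    (hv : IsLegal θ v) : IsLegal θ u := by
  obtain ⟨k, a, w, hw, hvw⟩ := hv
  exact ⟨k, a, w, hw, h.trans hvw⟩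

lemma legal_desub {v : List Letter} (hleg : IsLegal randFib v) (h2 : 2 ≤ v.length) :
    ∃ w' z' s p, IsLegal randFib w' ∧ z' ∈ substWord randFib w' ∧
      s.length ≤ 2 ∧ p.length ≤ 2 ∧ v = s ++ z' ++ p := by
  obtain ⟨k, c, z, hz, hvz⟩ := hleg
  cases k with
  | zero =>
    have hzz : z = [c] := hz
    subst hzz
    have := hvz.length_le
    simp at this
    omega
  | succ k =>
    have hz' : z ∈ ⋃ w ∈ substPowWord randFib k [c], substWord randFib w := hz
    simp only [Set.mem_iUnion, exists_prop] at hz'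
    obtain ⟨w, hw, hzw⟩ := hz'
    obtain ⟨w', z', s, p, hw', hza, hs, hp, rfl⟩ := desub_infix hzw hvz
    exact ⟨w', z', s, p, ⟨k, c, w, hw, hw'⟩, hza, hs, hp, rfl⟩

lemma legal_no_a {v : List Letter} (hleg : IsLegal randFib v)
    (ha : v.count Letter.a = 0) : v.length ≤ 4 := by
  by_contra h
  push_neg at h
  obtain ⟨w', z', s, p, hw', hz', hs, hp, rfl⟩ := legal_desub hleg (by omega)
  have h1 := (substWord_count hz').1
  have h2 := (substWord_count hz').2
  have hz0 : z'.count Letter.a = 0 := by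
    simp [List.count_append] at ha; omega
  have hzl := count_a_add_count_b z'
  have h3 := count_a_add_count_b w'
  have hlen : (s ++ z' ++ p).length = s.length + z'.length + p.length := by
    simp <;> omega
  omega

noncomputable def phi : ℝ := (1 + Real.sqrt 5) / 2

noncomputable def D (v : List Letter) : ℝ :=
    (v.count Letter.a : ℝ) - phi * (v.count Letter.b : ℝ)

lemma phi_sq : phi ^ 2 = phi + 1 := by
  have h5 : Real.sqrt 5 ^ 2 = 5 := Real.sq_sqrt (by norm_num)
  unfold phi; nlinarith [h5]

lemma phi_lb : (3/2 : ℝ) ≤ phi := by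
  have h5 : Real.sqrt 5 ^ 2 = 5 := Real.sq_sqrt (by norm_num)
  have h0 : 0 ≤ Real.sqrt 5 := Real.sqrt_nonneg 5
  unfold phi; nlinarith [sq_nonneg (Real.sqrt 5 - 2)]

lemma phi_ub : phi ≤ (81/50 : ℝ) := by
  have h5 : Real.sqrt 5 ^ 2 = 5 := Real.sq_sqrt (by norm_num)
  have h0 : 0 ≤ Real.sqrt 5 := Real.sqrt_nonneg 5
  unfold phi; nlinarith [sq_nonneg (Real.sqrt 5 - 2.24)]

set_option maxHeartbeats 1000000 in
lemma D_bound : ∀ n : ℕ, ∀ v : List Letter, v.length ≤ n → IsLegal randFib v →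
    |D v| ≤ 28 := by
  intro n
  induction n using Nat.strong_induction_on with
  | _ n ih =>
    intro v hn hleg
    have hca : (v.count Letter.a : ℝ) ≤ v.length := by
      exact_mod_cast (List.count_le_length (l := v))
    have hcb : (v.count Letter.b : ℝ) ≤ v.length := by
      exact_mod_cast (List.count_le_length (l := v))
    have hca0 : (0:ℝ) ≤ (v.count Letter.a : ℝ) := Nat.cast_nonneg _
    have hcb0 : (0:ℝ) ≤ (v.count Letter.b : ℝ) := Nat.cast_nonneg _
    by_cases hsmall : v.length ≤ 17
    · have hl : (v.length : ℝ) ≤ 17 := by exact_mod_cast hsmall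
      rw [abs_le]; unfold D
      constructor <;> nlinarith [phi_lb, phi_ub]
    · push_neg at hsmall
      obtain ⟨w', z', s, p, hw', hz', hs, hp, hveq⟩ := legal_desub hleg (by omega)
      have hza := (substWord_count hz').1
      have hzb := (substWord_count hz').2
      have hwl := count_a_add_count_b w'
      have hzl := count_a_add_count_b z'
      have hvl : v.length = s.length + z'.length + p.length := by
        rw [hveq]; simp <;> omega
      have hlt : w'.length < v.length := by
        by_cases h4 : w'.length ≤ 4
        · omega
        · have h1 : 1 ≤ w'.count Letter.a := by
            by_contra hc
            push_neg at hc
            have := legal_no_a hw' (by omega)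
            omega
          omega
      have hD' := ih w'.length (lt_of_lt_of_le hlt hn) w' le_rfl hw'
      rw [abs_le] at hD' ⊢
      unfold D at hD' ⊢
      have hceq_a : v.count Letter.a = s.count Letter.a + w'.length + p.count Letter.a := by
        rw [hveq]; simp [List.count_append]; omega
      have hceq_b : v.count Letter.b = s.count Letter.b + w'.count Letter.a + p.count Letter.b := by
        rw [hveq]; simp [List.count_append]; omega
      have hsa : s.count Letter.a ≤ 2 := (List.count_le_length (l := s)).trans hs
      have hsb : s.count Letter.b ≤ 2 := (List.count_le_length (l := s)).trans hs
      have hpa : p.count Letter.a ≤ 2 := (List.count_le_length (l := p)).trans hp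
      have hpb : p.count Letter.b ≤ 2 := (List.count_le_length (l := p)).trans hp
      have hA : (v.count Letter.a : ℝ)
          = s.count Letter.a + (w'.count Letter.a + w'.count Letter.b) + p.count Letter.a := by
        rw [hceq_a]; push_cast [← hwl]; ring
      have hB : (v.count Letter.b : ℝ)
          = s.count Letter.b + w'.count Letter.a + p.count Letter.b := by
        rw [hceq_b]; push_cast; ring
      have hsa' : (s.count Letter.a : ℝ) ≤ 2 := by exact_mod_cast hsa
      have hsb' : (s.count Letter.b : ℝ) ≤ 2 := by exact_mod_cast hsb
      have hpa' : (p.count Letter.a : ℝ) ≤ 2 := by exact_mod_cast hpa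
      have hpb' : (p.count Letter.b : ℝ) ≤ 2 := by exact_mod_cast hpb
      have hsa0 : (0:ℝ) ≤ (s.count Letter.a : ℝ) := Nat.cast_nonneg _
      have hsb0 : (0:ℝ) ≤ (s.count Letter.b : ℝ) := Nat.cast_nonneg _
      have hpa0 : (0:ℝ) ≤ (p.count Letter.a : ℝ) := Nat.cast_nonneg _
      have hpb0 : (0:ℝ) ≤ (p.count Letter.b : ℝ) := Nat.cast_nonneg _
      have hwa0 : (0:ℝ) ≤ (w'.count Letter.a : ℝ) := Nat.cast_nonneg _
      have hwb0 : (0:ℝ) ≤ (w'.count Letter.b : ℝ) := Nat.cast_nonneg _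
      have hphi2 := phi_sq
      have hlb := phi_lb
      have hub := phi_ub
      have key1 : (0:ℝ) ≤ (phi - 1) *
          ((w'.count Letter.a : ℝ) - phi * (w'.count Letter.b : ℝ) + 28) :=
        mul_nonneg (by linarith) (by linarith [hD'.1])
      have key2 : (0:ℝ) ≤ (phi - 1) *
          (28 - ((w'.count Letter.a : ℝ) - phi * (w'.count Letter.b : ℝ))) :=
        mul_nonneg (by linarith) (by linarith [hD'.2])
      constructor
      · rw [hA, hB]; nlinarith [key1, key2]
      · rw [hA, hB]; nlinarith [key1, key2]

lemma D_legal_bound {v : List Letter} (h : IsLegal randFib v) : |D v| ≤ 28 :=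
  D_bound v.length v le_rfl h

lemma extract_eq (x : ℤ → Letter) (i : ℤ) (n : ℕ) :
    extract x i n = (List.range n).map (fun j : ℕ => x (i + (j:ℤ))) := by
  unfold _root_.extract
  induction n with
  | zero => rfl
  | succ n ih => rw [List.range_succ]; simp_all

lemma extract_add (x : ℤ → Letter) (i : ℤ) (m n : ℕ) :
    extract x i (m + n) = extract x i m ++ extract x (i + m) n := by
  rw [extract_eq, extract_eq, extract_eq]
  rw [List.range_add, List.map_append, List.map_map]
  congr 1
  apply List.map_congr_left
  intro j hj
  simp only [Function.comp]
  congr 1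
  push_cast
  ring

lemma extract_shift {x : ℤ → Letter} {p : ℕ} (hp : HasPeriod x p) (i : ℤ) (n : ℕ) :
    extract x (i + p) n = extract x i n := by
  rw [extract_eq, extract_eq]
  apply List.map_congr_left
  intro j hj
  have := hp (i + j)
  rw [show i + (p:ℤ) + (j:ℤ) = i + (j:ℤ) + (p:ℤ) by ring]
  exact this

lemma extract_shift_mul {x : ℤ → Letter} {p : ℕ} (hp : HasPeriod x p)
    (m n : ℕ) (i : ℤ) : extract x (i + (m:ℤ) * (p:ℤ)) n = extract x i n := by
  induction m with
  | zero => simp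
  | succ m ih =>
    have : i + ((m:ℕ)+1 : ℕ) * (p:ℤ) = (i + (m:ℤ) * (p:ℤ)) + (p:ℤ) := by push_cast; ring
    rw [show ((m+1 : ℕ) : ℤ) = (m:ℤ) + 1 by push_cast; ring]
    rw [show i + ((m:ℤ)+1) * (p:ℤ) = (i + (m:ℤ)*(p:ℤ)) + (p:ℤ) by ring]
    rw [extract_shift hp, ih]

lemma extract_pow_count (c : Letter) {x : ℤ → Letter} {p : ℕ} (hp : HasPeriod x p)
    (m : ℕ) :
    (extract x 0 (m * p)).count c = m * (extract x 0 p).count c := by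
  induction m with
  | zero => simp [extract_eq]
  | succ m ih =>
    have h1 : (m+1) * p = m * p + p := by ring
    rw [h1, extract_add, List.count_append, ih]
    have h2 : (0:ℤ) + ((m*p : ℕ) : ℤ) = (0:ℤ) + (m:ℤ) * (p:ℤ) := by push_cast; ring
    rw [h2, extract_shift_mul hp]
    ring

end RandFibAux

/-- the random Fibonacci subshift contains no periodic points. -/
theorem randFib_no_periodic : ∀ x ∈ Subshift randFib, ¬ IsPeriodic x := by
  intro x hx hper
  obtain ⟨p, hp0, hp⟩ := hper
  set u := extract x 0 p with hu
  have hlenu : u.length = p := by rw [hu, RandFibAux.extract_eq]; simp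
  have hleg : ∀ m : ℕ, IsLegal randFib (extract x 0 (m * p)) := fun m => hx 0 (m * p)
  have hDm : ∀ m : ℕ, RandFibAux.D (extract x 0 (m*p)) = (m:ℝ) * RandFibAux.D u := by
    intro m
    unfold RandFibAux.D
    rw [RandFibAux.extract_pow_count Letter.a hp, RandFibAux.extract_pow_count Letter.b hp]
    push_cast
    ring
  have hbd : ∀ m : ℕ, |(m : ℝ) * RandFibAux.D u| ≤ 28 := by
    intro m
    rw [← hDm m]
    exact RandFibAux.D_legal_bound (hleg m)
  by_cases hD : RandFibAux.D u = 0
  · have hcnt := RandFibAux.count_a_add_count_b u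
    have hb0 : u.count Letter.b ≠ 0 := by
      intro h0
      unfold RandFibAux.D at hD
      rw [h0] at hD
      simp at hD
      have ha0 : u.count Letter.a = 0 := by exact_mod_cast hD
      omega
    have hbR : ((u.count Letter.b : ℝ)) ≠ 0 := by
      exact_mod_cast hb0
    have h5 : Real.sqrt 5 =
        (((2 * (u.count Letter.a : ℤ) - (u.count Letter.b : ℤ) : ℤ) : ℝ))
          / ((u.count Letter.b : ℝ)) := by
      unfold RandFibAux.D RandFibAux.phi at hD
      field_simp
      push_cast
      nlinarith [hD]
    have hirr : Irrational (Real.sqrt 5) := (by norm_num : Nat.Prime 5).irrational_sqrt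
    apply hirr
    refine ⟨((2 * (u.count Letter.a : ℤ) - (u.count Letter.b : ℤ) : ℤ) : ℚ)
      / ((u.count Letter.b : ℕ) : ℚ), ?_⟩
    rw [h5]
    push_cast
    ring
  · have h0 : 0 < |RandFibAux.D u| := abs_pos.mpr hD
    obtain ⟨m, hm⟩ := exists_nat_gt (28 / |RandFibAux.D u|)
    have hb := hbd m
    rw [abs_mul, Nat.abs_cast] at hb
    rw [div_lt_iff₀ h0] at hm
    linarith
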